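/- For each integer n ≥ 2 and each discrete function w : {1,…,n}² → ℝ (extended by 0 outside {1,…,n}²), let P_n(w) : ℝ² → ℝ be the piecewise constant function equal to w(i,j) on the cell R_{ij}ⁿ := ((i−1/2)/n, (i+1/2)/n) × ((j−1/2)/n, (j+1/2)/n) and 0 elsewhere, and define the upwind discrete total variation TVⁿ(w) := (1/n)·Σ_{(i,j)} ( (w(i+1,j)−w(i,j))₊² + (w(i−1,j)−w(i,j))₊² + (w(i,j+1)−w(i,j))₊² + (w(i,j−1)−w(i,j))₊² )^{1/2}, where t₊ := max(t,0). Then for every sequence of discrete functions wₙ : {1,…,n}² → ℝ and every v ∈ L¹(ℝ²) such that P_n(wₙ) → v in L¹((0,1)²), one has TV(v, (0,1)²) ≤ liminf_{n→∞} TVⁿ(wₙ). (Γ-liminf inequality for the upwind finite-difference discretization of the total variation.) -/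

import Mathlib

open MeasureTheory
open scoped ENNReal

noncomputable section

/-- The plane `ℝ²`. -/
abbrev E2 := EuclideanSpace ℝ (Fin 2)

/-- The divergence `∂₁p₁ + ∂₂p₂` of a vector field `p : ℝ² → ℝ²`. -/
def vdiv (p : E2 → E2) (x : E2) : ℝ :=
  ∑ i, fderiv ℝ p x (EuclideanSpace.single i 1) i

/-- The total variation `TV(v, A)` of `v` on `A`, defined by duality against `C¹`
compactly supported vector fields with values in the unit ball. -/
def TV (v : E2 → ℝ) (A : Set E2) : ℝ≥0∞ :=
  ⨆ p : {p : E2 → E2 //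
      ContDiff ℝ 1 p ∧ HasCompactSupport p ∧ tsupport p ⊆ A ∧ ∀ x, ‖p x‖ ≤ 1},
    ENNReal.ofReal (∫ x in A, v x * vdiv p.1 x)

/-- The open unit square `(0,1)²`. -/
def unitSq : Set E2 := {x | x 0 ∈ Set.Ioo (0 : ℝ) 1 ∧ x 1 ∈ Set.Ioo (0 : ℝ) 1}

/-- The piecewise constant interpolation of a discrete function `w : ℤ × ℤ → ℝ`: on the open
cell `R_{ij}ⁿ = ((i−1/2)/n, (i+1/2)/n) × ((j−1/2)/n, (j+1/2)/n)` it takes the value `w (i, j)`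
(the index of the cell containing `x` is recovered by rounding `n·x`). -/
def Pn (n : ℕ) (w : ℤ × ℤ → ℝ) (x : E2) : ℝ :=
  w (round ((n : ℝ) * x 0), round ((n : ℝ) * x 1))

/-- The positive part `t₊ = max(t,0)`. -/
def pos (t : ℝ) : ℝ := max t 0

/-- The upwind discrete total variation
`TVⁿ(w) = (1/n)·Σ_{(i,j)} ((w(i+1,j)−w(i,j))₊² + (w(i−1,j)−w(i,j))₊²
  + (w(i,j+1)−w(i,j))₊² + (w(i,j−1)−w(i,j))₊²)^{1/2}`
(the sum over the indices `0 ≤ i, j ≤ n+1` captures every nonzero term for discrete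
functions supported in the grid `{1,…,n}²`). -/
def TVn (n : ℕ) (w : ℤ × ℤ → ℝ) : ℝ :=
  (1 / (n : ℝ)) * ∑ i ∈ Finset.Icc (0 : ℤ) ((n : ℤ) + 1), ∑ j ∈ Finset.Icc (0 : ℤ) ((n : ℤ) + 1),
    Real.sqrt (pos (w (i + 1, j) - w (i, j)) ^ 2 + pos (w (i - 1, j) - w (i, j)) ^ 2 +
      pos (w (i, j + 1) - w (i, j)) ^ 2 + pos (w (i, j - 1) - w (i, j)) ^ 2)

namespace S14

/-! ### The chart `ℝ × ℝ ≃ E2` -/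

def TEm : (ℝ × ℝ) ≃ᵐ E2 :=
  (MeasurableEquiv.finTwoArrow (α := ℝ)).symm.trans
    (MeasurableEquiv.toLp 2 (Fin 2 → ℝ))

def TEL : (ℝ × ℝ) ≃L[ℝ] E2 :=
  (ContinuousLinearEquiv.finTwoArrow ℝ ℝ).symm.trans
    (EuclideanSpace.equiv (Fin 2) ℝ).symm

def TE : ℝ × ℝ → E2 := ⇑TEL

lemma coe_TEm : ⇑TEm = TE := by
  funext z; ext i; fin_cases i <;> rfl

@[simp] lemma TE_zero (z : ℝ × ℝ) : TE z 0 = z.1 := rfl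
@[simp] lemma TE_one (z : ℝ × ℝ) : TE z 1 = z.2 := rfl

lemma mpTE : MeasurePreserving TE volume volume := by
  rw [← coe_TEm]
  exact ((EuclideanSpace.volume_preserving_symm_measurableEquiv_toLp (Fin 2)).symm).comp
    ((volume_preserving_finTwoArrow ℝ).symm)

lemma embTE : MeasurableEmbedding TE := by
  rw [← coe_TEm]; exact TEm.measurableEmbedding

def TEcm : (ℝ × ℝ) →L[ℝ] E2 := TEL

lemma TE_eq_cm : TE = ⇑TEcm := rfl

lemma TE_basis0 : TE (1, 0) = EuclideanSpace.single (0 : Fin 2) (1 : ℝ) := by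
  ext i; fin_cases i <;> simp [EuclideanSpace.single_apply]

lemma TE_basis1 : TE (0, 1) = EuclideanSpace.single (1 : Fin 2) (1 : ℝ) := by
  ext i; fin_cases i <;> simp [EuclideanSpace.single_apply]

lemma coord_le_norm (z : E2) (i : Fin 2) : |z i| ≤ ‖z‖ := by
  rw [EuclideanSpace.norm_eq]
  rw [show |z i| = Real.sqrt (|z i| ^ 2) by rw [Real.sqrt_sq_eq_abs, abs_abs]]
  apply Real.sqrt_le_sqrt
  fin_cases i
  · rw [Fin.sum_univ_two]
    simp only [Real.norm_eq_abs, sq_abs]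
    exact le_add_of_nonneg_right (sq_nonneg _)
  · rw [Fin.sum_univ_two]
    simp only [Real.norm_eq_abs, sq_abs]
    exact le_add_of_nonneg_left (sq_nonneg _)

lemma norm_sq_eq (z : E2) : ‖z‖ ^ 2 = z 0 ^ 2 + z 1 ^ 2 := by
  rw [EuclideanSpace.norm_eq, Real.sq_sqrt (by positivity)]
  rw [Fin.sum_univ_two]
  simp [Real.norm_eq_abs, sq_abs]

/-! ### Grid geometry -/

def gridc (n : ℕ) (i : ℤ) : ℝ := ((i : ℝ) - 1/2) / n

lemma round_eq_iff' {n : ℕ} (hn : 0 < n) (t : ℝ) (i : ℤ) :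
    round ((n : ℝ) * t) = i ↔ gridc n i ≤ t ∧ t < gridc n (i+1) := by
  have hn' : (0:ℝ) < n := by exact_mod_cast hn
  rw [round_eq, Int.floor_eq_iff]
  unfold gridc
  rw [div_le_iff₀ hn', lt_div_iff₀ hn']
  push_cast
  constructor <;> rintro ⟨h1, h2⟩ <;> constructor <;> nlinarith

lemma gridc_le {n : ℕ} (hn : 0 < n) (i : ℤ) : gridc n i ≤ gridc n (i+1) := by
  have hn' : (0:ℝ) < n := by exact_mod_cast hn
  unfold gridc
  rw [div_le_div_iff_of_pos_right hn']
  push_cast; linarith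

lemma gridc_sub {n : ℕ} (hn : 0 < n) (i : ℤ) : gridc n (i+1) - gridc n i = 1 / n := by
  have hn' : (0:ℝ) < n := by exact_mod_cast hn
  unfold gridc
  rw [div_sub_div_same]
  push_cast
  ring_nf

lemma gridc_dist {n : ℕ} (hn : 0 < n) (i : ℤ) : |gridc n (i+1) - (i : ℝ)/n| = 1/(2*n) := by
  have hn' : (0:ℝ) < n := by exact_mod_cast hn
  unfold gridc
  have h0 : (0:ℝ) ≤ ((i:ℝ)+1 - 1/2) / n - (i:ℝ)/n := by
    rw [sub_nonneg, div_le_div_iff_of_pos_right hn']; linarith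
  push_cast
  rw [abs_of_nonneg h0]
  field_simp
  ring

def cell (n : ℕ) (i j : ℤ) : Set E2 :=
  {x | round ((n:ℝ) * x 0) = i ∧ round ((n:ℝ) * x 1) = j}

lemma cell_preimage {n : ℕ} (hn : 0 < n) (i j : ℤ) :
    TE ⁻¹' cell n i j =
      Set.Ico (gridc n i) (gridc n (i+1)) ×ˢ Set.Ico (gridc n j) (gridc n (j+1)) := by
  ext z
  simp only [Set.mem_preimage, cell, Set.mem_setOf_eq, Set.mem_prod, Set.mem_Ico,
    TE_zero, TE_one, round_eq_iff' hn]

lemma cell_eq_image {n : ℕ} (hn : 0 < n) (i j : ℤ) :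
    cell n i j = TE '' (Set.Ico (gridc n i) (gridc n (i+1)) ×ˢ Set.Ico (gridc n j) (gridc n (j+1))) := by
  rw [← cell_preimage hn, Set.image_preimage_eq _ (by rw [← coe_TEm]; exact TEm.surjective)]

lemma cell_measurable {n : ℕ} (hn : 0 < n) (i j : ℤ) : MeasurableSet (cell n i j) := by
  rw [cell_eq_image hn]
  exact embTE.measurableSet_image.2 ((measurableSet_Ico).prod measurableSet_Ico)

lemma cell_volume_lt_top {n : ℕ} (hn : 0 < n) (i j : ℤ) : volume (cell n i j) < ⊤ := by
  have := mpTE.measure_preimage (cell_measurable hn i j).nullMeasurableSet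
  rw [cell_preimage hn] at this
  rw [← this]
  rw [show (volume : Measure (ℝ × ℝ)) = (volume : Measure ℝ).prod volume from rfl]
  rw [Measure.prod_prod]
  exact ENNReal.mul_lt_top (measure_Ico_lt_top) (measure_Ico_lt_top)

/-! ### Pointwise decomposition of `Pn` -/

def Sgrid (n : ℕ) : Finset (ℤ × ℤ) :=
  Finset.Icc 0 ((n:ℤ)+1) ×ˢ Finset.Icc 0 ((n:ℤ)+1)

lemma Pn_eq_sum {n : ℕ} (hn : 2 ≤ n) (w : ℤ × ℤ → ℝ)
    (hw : ∀ q : ℤ × ℤ, ¬(1 ≤ q.1 ∧ q.1 ≤ (n : ℤ) ∧ 1 ≤ q.2 ∧ q.2 ≤ (n : ℤ)) → w q = 0)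
    (x : E2) :
    Pn n w x = ∑ q ∈ Sgrid n, w q * (cell n q.1 q.2).indicator (fun _ => (1:ℝ)) x := by
  set i0 := round ((n:ℝ) * x 0)
  set j0 := round ((n:ℝ) * x 1)
  have hmem : ∀ i j : ℤ, x ∈ cell n i j ↔ i = i0 ∧ j = j0 := by
    intro i j
    constructor
    · rintro ⟨h1, h2⟩; exact ⟨h1.symm, h2.symm⟩
    · rintro ⟨h1, h2⟩; exact ⟨h1.symm, h2.symm⟩
  rw [Finset.sum_eq_single (i0, j0)]
  · rw [Set.indicator_of_mem (by rw [hmem]; exact ⟨rfl, rfl⟩), mul_one]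
    rfl
  · rintro ⟨i, j⟩ _ hne
    rw [Set.indicator_of_notMem, mul_zero]
    rw [hmem]
    rintro ⟨rfl, rfl⟩
    exact hne rfl
  · intro hnot
    rw [Set.indicator_of_mem (by rw [hmem]; exact ⟨rfl, rfl⟩), mul_one]
    apply hw
    rintro ⟨h1, h2, h3, h4⟩
    apply hnot
    simp only [Sgrid, Finset.mem_product, Finset.mem_Icc]
    omega

/-! ### Elementary `pos` lemmas -/

lemma pos_nonneg (t : ℝ) : 0 ≤ pos t := le_max_right _ _

lemma le_pos (t : ℝ) : t ≤ pos t := le_max_left _ _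

lemma pos_sq_add (u : ℝ) : pos u ^ 2 + pos (-u) ^ 2 = u ^ 2 := by
  rcases le_total u 0 with h | h
  · rw [pos, pos, max_eq_right h, max_eq_left (by linarith)]; ring
  · rw [pos, pos, max_eq_left h, max_eq_right (by linarith)]; ring

lemma pos_abs (u : ℝ) : pos u ≤ |u| := by
  rw [pos]; rcases le_total u 0 with h | h
  · rw [max_eq_right h]; positivity
  · rw [max_eq_left h]; exact le_abs_self u

lemma mul_le_pos (u V : ℝ) : u * V ≤ pos u * pos V + pos (-u) * pos (-V) := by
  rcases le_total u 0 with h | h <;> rcases le_total V 0 with h' | h' <;>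
    simp only [pos] <;>
    [ (rw [max_eq_right h, max_eq_right h', max_eq_left, max_eq_left]);
      (rw [max_eq_right h, max_eq_left h', max_eq_left, max_eq_right]);
      (rw [max_eq_left h, max_eq_right h', max_eq_right, max_eq_left]);
      (rw [max_eq_left h, max_eq_left h', max_eq_right, max_eq_right])] <;>
    nlinarith

lemma pos_lip (a b : ℝ) : pos a ≤ pos b + |a - b| := by
  simp only [pos]
  apply max_le
  · calc a = b + (a - b) := by ring
      _ ≤ max b 0 + |a - b| := add_le_add (le_max_left _ _) (le_abs_self _)
  · have h1 : (0:ℝ) ≤ max b 0 := le_max_right _ _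
    have h2 : (0:ℝ) ≤ |a - b| := abs_nonneg _
    linarith

/-- Four-term Cauchy–Schwarz. -/
lemma cs4 {a b c d A B C D : ℝ} (ha : 0 ≤ a) (hb : 0 ≤ b) (hc : 0 ≤ c) (hd : 0 ≤ d)
    (hA : 0 ≤ A) (hB : 0 ≤ B) (hC : 0 ≤ C) (hD : 0 ≤ D) :
    a*A + b*B + c*C + d*D ≤
      Real.sqrt (a^2 + b^2 + c^2 + d^2) * Real.sqrt (A^2 + B^2 + C^2 + D^2) := by
  have h1 : Real.sqrt (a^2 + b^2 + c^2 + d^2) ^ 2 = a^2 + b^2 + c^2 + d^2 :=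
    Real.sq_sqrt (by positivity)
  have h2 : Real.sqrt (A^2 + B^2 + C^2 + D^2) ^ 2 = A^2 + B^2 + C^2 + D^2 :=
    Real.sq_sqrt (by positivity)
  have hs : 0 ≤ Real.sqrt (a^2 + b^2 + c^2 + d^2) := Real.sqrt_nonneg _
  have ht : 0 ≤ Real.sqrt (A^2 + B^2 + C^2 + D^2) := Real.sqrt_nonneg _
  nlinarith [sq_nonneg (a*B - b*A), sq_nonneg (a*C - c*A), sq_nonneg (a*D - d*A),
    sq_nonneg (b*C - c*B), sq_nonneg (b*D - d*B), sq_nonneg (c*D - d*C),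
    mul_nonneg (mul_nonneg ha hA) (mul_nonneg hb hB),
    mul_nonneg hs ht, sq_nonneg (Real.sqrt (a^2 + b^2 + c^2 + d^2) * Real.sqrt (A^2 + B^2 + C^2 + D^2) - (a*A + b*B + c*C + d*D)),
    mul_nonneg (mul_nonneg ha hA) (mul_nonneg hc hC),
    mul_nonneg (mul_nonneg ha hA) (mul_nonneg hd hD),
    mul_nonneg (mul_nonneg hb hB) (mul_nonneg hc hC),
    mul_nonneg (mul_nonneg hb hB) (mul_nonneg hd hD),
    mul_nonneg (mul_nonneg hc hC) (mul_nonneg hd hD)]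

/-! ### Shifting sums over `Icc 0 (m+1)` -/

lemma sum_shift (H : ℤ → ℝ) (m : ℤ) (hm : 0 ≤ m) (h1 : H (-1) = 0) (h2 : H (m+1) = 0) :
    ∑ i ∈ Finset.Icc (0:ℤ) (m+1), H (i-1) = ∑ i ∈ Finset.Icc (0:ℤ) (m+1), H i := by
  have e1 : ∑ i ∈ Finset.Icc (0:ℤ) (m+1), H (i-1) = ∑ i ∈ Finset.Icc (-1:ℤ) m, H i := by
    apply Finset.sum_nbij' (fun i => i - 1) (fun i => i + 1) <;>
      intros <;> simp_all [Finset.mem_Icc] <;> omega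
  have e2 : Finset.Icc (-1:ℤ) m = insert (-1) (Finset.Icc 0 m) := by
    ext k; simp [Finset.mem_Icc]; omega
  have e3 : Finset.Icc (0:ℤ) (m+1) = insert (m+1) (Finset.Icc 0 m) := by
    ext k; simp [Finset.mem_Icc]; omega
  rw [e1, e2, Finset.sum_insert (by simp), h1, zero_add, e3,
    Finset.sum_insert (by simp [Finset.mem_Icc]), h2, zero_add]

/-! ### Properties of `vdiv` -/

section P

variable {p : E2 → E2}

lemma vdiv_continuous (hp1 : ContDiff ℝ 1 p) : Continuous (vdiv p) := by
  unfold vdiv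
  apply continuous_finset_sum
  intro i _
  exact (EuclideanSpace.proj i).continuous.comp
    ((ContinuousLinearMap.apply ℝ E2 (EuclideanSpace.single i (1:ℝ))).continuous.comp
      (hp1.continuous_fderiv one_ne_zero))

lemma vdiv_compact_support (hp2 : HasCompactSupport p) : HasCompactSupport (vdiv p) := by
  have h := hp2.fderiv (𝕜 := ℝ)
  exact h.comp_left (g := fun L : E2 →L[ℝ] E2 => ∑ i, L (EuclideanSpace.single i 1) i)
    (by simp)

lemma vdiv_integrable (hp1 : ContDiff ℝ 1 p) (hp2 : HasCompactSupport p) :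
    Integrable (vdiv p) :=
  (vdiv_continuous hp1).integrable_of_hasCompactSupport (vdiv_compact_support hp2)

lemma vdiv_zero_off_unitSq (hp3 : tsupport p ⊆ unitSq) {x : E2} (hx : x ∉ unitSq) :
    vdiv p x = 0 := by
  have hx' : x ∉ tsupport p := fun h => hx (hp3 h)
  have hev : p =ᶠ[nhds x] 0 := notMem_tsupport_iff_eventuallyEq.1 hx'
  have hfd : fderiv ℝ p x = 0 := by
    rw [hev.fderiv_eq]
    exact fderiv_const_apply 0
  rw [vdiv]
  simp [hfd]

/-! ### Face integrals and the per-cell divergence theorem -/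

def fX (p : E2 → E2) (z : ℝ × ℝ) : ℝ := p (TE z) 0
def fY (p : E2 → E2) (z : ℝ × ℝ) : ℝ := p (TE z) 1

def XF (p : E2 → E2) (n : ℕ) (i j : ℤ) : ℝ :=
  ∫ t in gridc n j..gridc n (j+1), fX p (gridc n (i+1), t)

def YF (p : E2 → E2) (n : ℕ) (i j : ℤ) : ℝ :=
  ∫ s in gridc n i..gridc n (i+1), fY p (s, gridc n (j+1))

lemma fX_cont (hp1 : ContDiff ℝ 1 p) : Continuous (fX p) :=
  (EuclideanSpace.proj (0 : Fin 2)).continuous.comp (hp1.continuous.comp TEL.continuous)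

lemma fY_cont (hp1 : ContDiff ℝ 1 p) : Continuous (fY p) :=
  (EuclideanSpace.proj (1 : Fin 2)).continuous.comp (hp1.continuous.comp TEL.continuous)

def DfX (p : E2 → E2) (z : ℝ × ℝ) : (ℝ × ℝ) →L[ℝ] ℝ :=
  (EuclideanSpace.proj (0 : Fin 2)).comp ((fderiv ℝ p (TE z)).comp TEcm)

def DfY (p : E2 → E2) (z : ℝ × ℝ) : (ℝ × ℝ) →L[ℝ] ℝ :=
  (EuclideanSpace.proj (1 : Fin 2)).comp ((fderiv ℝ p (TE z)).comp TEcm)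

lemma hasFDeriv_fX (hp1 : ContDiff ℝ 1 p) (z : ℝ × ℝ) :
    HasFDerivAt (fX p) (DfX p z) z := by
  have h1 : HasFDerivAt TE TEcm z := TEcm.hasFDerivAt
  have h2 : HasFDerivAt p (fderiv ℝ p (TE z)) (TE z) :=
    (hp1.differentiable one_ne_zero (TE z)).hasFDerivAt
  exact (EuclideanSpace.proj (0 : Fin 2)).hasFDerivAt.comp z (h2.comp z h1)

lemma hasFDeriv_fY (hp1 : ContDiff ℝ 1 p) (z : ℝ × ℝ) :
    HasFDerivAt (fY p) (DfY p z) z := by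
  have h1 : HasFDerivAt TE TEcm z := TEcm.hasFDerivAt
  have h2 : HasFDerivAt p (fderiv ℝ p (TE z)) (TE z) :=
    (hp1.differentiable one_ne_zero (TE z)).hasFDerivAt
  exact (EuclideanSpace.proj (1 : Fin 2)).hasFDerivAt.comp z (h2.comp z h1)

lemma div_eq (p : E2 → E2) (z : ℝ × ℝ) :
    DfX p z (1, 0) + DfY p z (0, 1) = vdiv p (TE z) := by
  simp only [DfX, DfY, ContinuousLinearMap.comp_apply]
  rw [show TEcm (1, 0) = EuclideanSpace.single (0 : Fin 2) (1:ℝ) from TE_basis0,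
    show TEcm (0, 1) = EuclideanSpace.single (1 : Fin 2) (1:ℝ) from TE_basis1]
  rw [vdiv, Fin.sum_univ_two]
  rfl

lemma prod_IcoIcc_ae (a b c d : ℝ) :
    (Set.Ico a b ×ˢ Set.Ico c d : Set (ℝ × ℝ)) =ᵐ[volume] (Set.Icc a b ×ˢ Set.Icc c d) := by
  rw [MeasureTheory.ae_eq_set]
  constructor
  · rw [Set.diff_eq_empty.2 (Set.prod_mono Set.Ico_subset_Icc_self Set.Ico_subset_Icc_self)]
    exact measure_empty
  · apply measure_mono_null
      (show (Set.Icc a b ×ˢ Set.Icc c d) \ (Set.Ico a b ×ˢ Set.Ico c d) ⊆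
        ({b} ×ˢ (Set.univ : Set ℝ)) ∪ ((Set.univ : Set ℝ) ×ˢ {d}) from ?_)
    · apply measure_union_null
      · rw [Measure.volume_eq_prod, Measure.prod_prod]
        simp
      · rw [Measure.volume_eq_prod, Measure.prod_prod]
        simp
    · rintro ⟨x, y⟩ ⟨⟨⟨hx1, hx2⟩, ⟨hy1, hy2⟩⟩, hns⟩
      by_cases hxb : x = b
      · exact Or.inl ⟨hxb, trivial⟩
      by_cases hyd : y = d
      · exact Or.inr ⟨trivial, hyd⟩
      exact absurd ⟨⟨hx1, lt_of_le_of_ne hx2 hxb⟩, ⟨hy1, lt_of_le_of_ne hy2 hyd⟩⟩ hns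

lemma cell_div (hp1 : ContDiff ℝ 1 p) (hp2 : HasCompactSupport p) {n : ℕ} (hn : 0 < n)
    (i j : ℤ) :
    ∫ x in cell n i j, vdiv p x =
      (YF p n i j - YF p n i (j-1)) + (XF p n i j - XF p n (i-1) j) := by
  have hdivint : (fun z : ℝ × ℝ => DfX p z (1, 0) + DfY p z (0, 1)) =
      fun z => vdiv p (TE z) := funext (div_eq p)
  have key := integral_divergence_prod_Icc_of_hasFDerivAt_off_countable_of_le
    (fX p) (fY p) (DfX p) (DfY p) (gridc n i, gridc n j) (gridc n (i+1), gridc n (j+1))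
    ⟨gridc_le hn i, gridc_le hn j⟩ ∅ Set.countable_empty
    (fX_cont hp1).continuousOn (fY_cont hp1).continuousOn
    (fun z _ => hasFDeriv_fX hp1 z) (fun z _ => hasFDeriv_fY hp1 z)
    (by
      rw [hdivint]
      exact (((vdiv_continuous hp1).comp TEL.continuous).continuousOn).integrableOn_compact
        isCompact_Icc)
  rw [← mpTE.setIntegral_preimage_emb embTE (vdiv p) (cell n i j)]
  rw [cell_preimage hn]
  rw [setIntegral_congr_set (prod_IcoIcc_ae _ _ _ _)]
  rw [Set.Icc_prod_Icc]
  rw [show (fun z : ℝ × ℝ => vdiv p (TE z)) = fun z => DfX p z (1, 0) + DfY p z (0, 1) from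
    hdivint.symm]
  rw [key]
  show _ = (YF p n i j - YF p n i (j-1)) + (XF p n i j - XF p n (i-1) j)
  rw [YF, YF, XF, XF]
  rw [show j - 1 + 1 = j from by omega, show i - 1 + 1 = i from by omega]
  show (((∫ x in (gridc n i)..(gridc n (i+1)), fY p (x, gridc n (j+1))) -
      ∫ x in (gridc n i)..(gridc n (i+1)), fY p (x, gridc n j)) +
      ∫ y in (gridc n j)..(gridc n (j+1)), fX p (gridc n (i+1), y)) -
      (∫ y in (gridc n j)..(gridc n (j+1)), fX p (gridc n i, y)) = _
  ring

lemma unitSq_decomp (hp1 : ContDiff ℝ 1 p) (hp2 : HasCompactSupport p)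
    (hp3 : tsupport p ⊆ unitSq) {n : ℕ} (hn : 2 ≤ n) (w : ℤ × ℤ → ℝ)
    (hw : ∀ q : ℤ × ℤ, ¬(1 ≤ q.1 ∧ q.1 ≤ (n : ℤ) ∧ 1 ≤ q.2 ∧ q.2 ≤ (n : ℤ)) → w q = 0) :
    ∫ x in unitSq, Pn n w x * vdiv p x =
      ∑ q ∈ Sgrid n, w q * ∫ x in cell n q.1 q.2, vdiv p x := by
  have hn0 : 0 < n := by omega
  have hzero : ∀ x, x ∉ unitSq → Pn n w x * vdiv p x = 0 := fun x hx => by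
    rw [vdiv_zero_off_unitSq hp3 hx, mul_zero]
  rw [setIntegral_eq_integral_of_forall_compl_eq_zero hzero]
  have hrepr : (fun x => Pn n w x * vdiv p x) =
      fun x => ∑ q ∈ Sgrid n, w q * (cell n q.1 q.2).indicator (vdiv p) x := by
    funext x
    rw [Pn_eq_sum hn w hw x, Finset.sum_mul]
    apply Finset.sum_congr rfl
    intro q _
    by_cases hx : x ∈ cell n q.1 q.2
    · rw [Set.indicator_of_mem hx, Set.indicator_of_mem hx]; ring
    · rw [Set.indicator_of_notMem hx, Set.indicator_of_notMem hx]; ring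
  rw [hrepr]
  rw [integral_finset_sum _ (fun q _ =>
    (((vdiv_integrable hp1 hp2).indicator (cell_measurable hn0 _ _)).const_mul _))]
  apply Finset.sum_congr rfl
  intro q _
  rw [MeasureTheory.integral_const_mul, integral_indicator (cell_measurable hn0 _ _)]

end P

/-! ### Abel summation -/

lemma abel_sum (n : ℕ) (w : ℤ × ℤ → ℝ)
    (hw : ∀ q : ℤ × ℤ, ¬(1 ≤ q.1 ∧ q.1 ≤ (n : ℤ) ∧ 1 ≤ q.2 ∧ q.2 ≤ (n : ℤ)) → w q = 0)
    (X Y : ℤ → ℤ → ℝ) :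
    ∑ q ∈ Sgrid n, w q * ((Y q.1 q.2 - Y q.1 (q.2-1)) + (X q.1 q.2 - X (q.1-1) q.2)) =
    ∑ q ∈ Sgrid n, ((w q - w (q.1+1, q.2)) * X q.1 q.2 + (w q - w (q.1, q.2+1)) * Y q.1 q.2) := by
  have hm : (0:ℤ) ≤ (n:ℤ) := Int.ofNat_nonneg n
  rw [Sgrid, Finset.sum_product, Finset.sum_product]
  have hC : ∀ i : ℤ, ∑ j ∈ Finset.Icc (0:ℤ) ((n:ℤ)+1), w (i, j) * Y i (j-1) =
      ∑ j ∈ Finset.Icc (0:ℤ) ((n:ℤ)+1), w (i, j+1) * Y i j := by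
    intro i
    have hz1 : w (i, -1+1) * Y i (-1) = 0 := by rw [hw (i, -1+1) (by norm_num)]; ring
    have hz2 : w (i, (n:ℤ)+1+1) * Y i ((n:ℤ)+1) = 0 := by
      rw [hw (i, (n:ℤ)+1+1) (by omega)]; ring
    have hs := sum_shift (fun k => w (i, k+1) * Y i k) (n:ℤ) hm hz1 hz2
    calc ∑ j ∈ Finset.Icc (0:ℤ) ((n:ℤ)+1), w (i, j) * Y i (j-1)
        = ∑ j ∈ Finset.Icc (0:ℤ) ((n:ℤ)+1), (fun k => w (i, k+1) * Y i k) (j-1) :=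
          Finset.sum_congr rfl (fun j _ => by
            show w (i, j) * Y i (j-1) = w (i, (j-1)+1) * Y i (j-1)
            rw [show j - 1 + 1 = j from by omega])
      _ = ∑ j ∈ Finset.Icc (0:ℤ) ((n:ℤ)+1), w (i, j+1) * Y i j := hs
  have hD : ∑ i ∈ Finset.Icc (0:ℤ) ((n:ℤ)+1), ∑ j ∈ Finset.Icc (0:ℤ) ((n:ℤ)+1),
        w (i, j) * X (i-1) j =
      ∑ i ∈ Finset.Icc (0:ℤ) ((n:ℤ)+1), ∑ j ∈ Finset.Icc (0:ℤ) ((n:ℤ)+1),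
        w (i+1, j) * X i j := by
    calc ∑ i ∈ Finset.Icc (0:ℤ) ((n:ℤ)+1), ∑ j ∈ Finset.Icc (0:ℤ) ((n:ℤ)+1),
          w (i, j) * X (i-1) j
        = ∑ i ∈ Finset.Icc (0:ℤ) ((n:ℤ)+1),
            (fun k => ∑ j ∈ Finset.Icc (0:ℤ) ((n:ℤ)+1), w (k+1, j) * X k j) (i-1) :=
          Finset.sum_congr rfl (fun i _ => by
            show _ = ∑ j ∈ Finset.Icc (0:ℤ) ((n:ℤ)+1), w ((i-1)+1, j) * X (i-1) j
            exact Finset.sum_congr rfl (fun j _ => by rw [show i - 1 + 1 = i from by omega]))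
      _ = ∑ i ∈ Finset.Icc (0:ℤ) ((n:ℤ)+1), ∑ j ∈ Finset.Icc (0:ℤ) ((n:ℤ)+1),
            w (i+1, j) * X i j := by
          have hz1 : (∑ j ∈ Finset.Icc (0:ℤ) ((n:ℤ)+1), w (-1+1, j) * X (-1) j) = 0 :=
            Finset.sum_eq_zero (fun j _ => by rw [hw (-1+1, j) (by norm_num)]; ring)
          have hz2 : (∑ j ∈ Finset.Icc (0:ℤ) ((n:ℤ)+1), w ((n:ℤ)+1+1, j) * X ((n:ℤ)+1) j) = 0 :=
            Finset.sum_eq_zero (fun j _ => by rw [hw ((n:ℤ)+1+1, j) (by omega)]; ring)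
          exact sum_shift
            (fun k => ∑ j ∈ Finset.Icc (0:ℤ) ((n:ℤ)+1), w (k+1, j) * X k j) (n:ℤ) hm hz1 hz2
  simp only [mul_add, mul_sub, sub_mul, Finset.sum_add_distrib, Finset.sum_sub_distrib]
  rw [Finset.sum_congr rfl (fun i _ => hC i), hD]
  ring

/-! ### Upwind regrouping -/

lemma upwind (n : ℕ) (w : ℤ × ℤ → ℝ)
    (hw : ∀ q : ℤ × ℤ, ¬(1 ≤ q.1 ∧ q.1 ≤ (n : ℤ) ∧ 1 ≤ q.2 ∧ q.2 ≤ (n : ℤ)) → w q = 0)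
    (X Y : ℤ → ℤ → ℝ) :
    ∑ q ∈ Sgrid n, ((w q - w (q.1+1, q.2)) * X q.1 q.2 + (w q - w (q.1, q.2+1)) * Y q.1 q.2) ≤
    ∑ q ∈ Sgrid n,
      (pos (w (q.1+1, q.2) - w q) * pos (-(X q.1 q.2))
        + pos (w (q.1-1, q.2) - w q) * pos (X (q.1-1) q.2)
        + pos (w (q.1, q.2+1) - w q) * pos (-(Y q.1 q.2))
        + pos (w (q.1, q.2-1) - w q) * pos (Y q.1 (q.2-1))) := by
  have hm : (0:ℤ) ≤ (n:ℤ) := Int.ofNat_nonneg n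
  have step_a : ∑ q ∈ Sgrid n,
      ((w q - w (q.1+1, q.2)) * X q.1 q.2 + (w q - w (q.1, q.2+1)) * Y q.1 q.2) ≤
      ∑ q ∈ Sgrid n,
      ((pos (w q - w (q.1+1, q.2)) * pos (X q.1 q.2)
          + pos (w (q.1+1, q.2) - w q) * pos (-(X q.1 q.2)))
        + (pos (w q - w (q.1, q.2+1)) * pos (Y q.1 q.2)
          + pos (w (q.1, q.2+1) - w q) * pos (-(Y q.1 q.2)))) := by
    apply Finset.sum_le_sum
    intro q _
    have h1 := mul_le_pos (w q - w (q.1+1, q.2)) (X q.1 q.2)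
    have h2 := mul_le_pos (w q - w (q.1, q.2+1)) (Y q.1 q.2)
    rw [show -(w q - w (q.1+1, q.2)) = w (q.1+1, q.2) - w q from by ring] at h1
    rw [show -(w q - w (q.1, q.2+1)) = w (q.1, q.2+1) - w q from by ring] at h2
    linarith
  refine le_trans step_a (le_of_eq ?_)
  rw [Sgrid, Finset.sum_product, Finset.sum_product]
  have hE1 : ∑ i ∈ Finset.Icc (0:ℤ) ((n:ℤ)+1), ∑ j ∈ Finset.Icc (0:ℤ) ((n:ℤ)+1),
        pos (w (i, j) - w (i+1, j)) * pos (X i j) =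
      ∑ i ∈ Finset.Icc (0:ℤ) ((n:ℤ)+1), ∑ j ∈ Finset.Icc (0:ℤ) ((n:ℤ)+1),
        pos (w (i-1, j) - w (i, j)) * pos (X (i-1) j) := by
    have hs := sum_shift
      (fun k => ∑ j ∈ Finset.Icc (0:ℤ) ((n:ℤ)+1), pos (w (k, j) - w (k+1, j)) * pos (X k j))
      (n:ℤ) hm
      (show (∑ j ∈ Finset.Icc (0:ℤ) ((n:ℤ)+1),
          pos (w (-1, j) - w (-1+1, j)) * pos (X (-1) j)) = 0 from
        Finset.sum_eq_zero (fun j _ => by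
          rw [hw (-1, j) (by norm_num), hw (-1+1, j) (by norm_num)]
          simp [pos]))
      (show (∑ j ∈ Finset.Icc (0:ℤ) ((n:ℤ)+1),
          pos (w ((n:ℤ)+1, j) - w ((n:ℤ)+1+1, j)) * pos (X ((n:ℤ)+1) j)) = 0 from
        Finset.sum_eq_zero (fun j _ => by
          rw [hw ((n:ℤ)+1, j) (by omega), hw ((n:ℤ)+1+1, j) (by omega)]
          simp [pos]))
    calc ∑ i ∈ Finset.Icc (0:ℤ) ((n:ℤ)+1), ∑ j ∈ Finset.Icc (0:ℤ) ((n:ℤ)+1),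
          pos (w (i, j) - w (i+1, j)) * pos (X i j)
        = ∑ i ∈ Finset.Icc (0:ℤ) ((n:ℤ)+1),
            (fun k => ∑ j ∈ Finset.Icc (0:ℤ) ((n:ℤ)+1),
              pos (w (k, j) - w (k+1, j)) * pos (X k j)) (i-1) := hs.symm
      _ = ∑ i ∈ Finset.Icc (0:ℤ) ((n:ℤ)+1), ∑ j ∈ Finset.Icc (0:ℤ) ((n:ℤ)+1),
            pos (w (i-1, j) - w (i, j)) * pos (X (i-1) j) :=
          Finset.sum_congr rfl (fun i _ => by
            show (∑ j ∈ Finset.Icc (0:ℤ) ((n:ℤ)+1),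
              pos (w (i-1, j) - w ((i-1)+1, j)) * pos (X (i-1) j)) = _
            exact Finset.sum_congr rfl (fun j _ => by rw [show i - 1 + 1 = i from by omega]))
  have hE2 : ∀ i : ℤ, ∑ j ∈ Finset.Icc (0:ℤ) ((n:ℤ)+1),
        pos (w (i, j) - w (i, j+1)) * pos (Y i j) =
      ∑ j ∈ Finset.Icc (0:ℤ) ((n:ℤ)+1),
        pos (w (i, j-1) - w (i, j)) * pos (Y i (j-1)) := by
    intro i
    have hs := sum_shift
      (fun k => pos (w (i, k) - w (i, k+1)) * pos (Y i k)) (n:ℤ) hm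
      (show pos (w (i, -1) - w (i, -1+1)) * pos (Y i (-1)) = 0 from by
        rw [hw (i, -1) (by norm_num), hw (i, -1+1) (by norm_num)]
        simp [pos])
      (show pos (w (i, (n:ℤ)+1) - w (i, (n:ℤ)+1+1)) * pos (Y i ((n:ℤ)+1)) = 0 from by
        rw [hw (i, (n:ℤ)+1) (by omega), hw (i, (n:ℤ)+1+1) (by omega)]
        simp [pos])
    calc ∑ j ∈ Finset.Icc (0:ℤ) ((n:ℤ)+1), pos (w (i, j) - w (i, j+1)) * pos (Y i j)
        = ∑ j ∈ Finset.Icc (0:ℤ) ((n:ℤ)+1),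
            (fun k => pos (w (i, k) - w (i, k+1)) * pos (Y i k)) (j-1) := hs.symm
      _ = ∑ j ∈ Finset.Icc (0:ℤ) ((n:ℤ)+1), pos (w (i, j-1) - w (i, j)) * pos (Y i (j-1)) :=
          Finset.sum_congr rfl (fun j _ => by
            show pos (w (i, j-1) - w (i, (j-1)+1)) * pos (Y i (j-1)) = _
            rw [show j - 1 + 1 = j from by omega])
  simp only [Finset.sum_add_distrib]
  rw [hE1, Finset.sum_congr rfl (fun i _ => hE2 i)]
  ring


/-! ### Per-cell face estimates -/

lemma face_bound {φ : ℝ → ℝ} (hφ : Continuous φ) {a b M : ℝ} (hab : a ≤ b)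
    (hM : ∀ t ∈ Set.Icc a b, φ t ≤ M) (hM0 : 0 ≤ M) :
    pos (∫ t in a..b, φ t) ≤ (b - a) * M := by
  have h1 : (∫ t in a..b, φ t) ≤ ∫ _t in a..b, M :=
    intervalIntegral.integral_mono_on hab (hφ.intervalIntegrable a b)
      intervalIntegrable_const hM
  rw [intervalIntegral.integral_const, smul_eq_mul] at h1
  have hba : 0 ≤ b - a := by linarith
  exact max_le h1 (by nlinarith)

lemma gridc_eq {n : ℕ} (hn : 0 < n) (i : ℤ) : gridc n i = (i:ℝ)/n - 1/(2*n) := by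
  have hn' : (0:ℝ) < n := by exact_mod_cast hn
  unfold gridc
  field_simp

lemma mid_bound {n : ℕ} (hn : 0 < n) (j : ℤ) {t : ℝ}
    (ht : t ∈ Set.Icc (gridc n j) (gridc n (j+1))) : |t - (j:ℝ)/n| ≤ 1/(2*n) := by
  have hn' : (0:ℝ) < n := by exact_mod_cast hn
  obtain ⟨h1, h2⟩ := ht
  rw [gridc_eq hn] at h1 h2
  have hc : ((j+1 : ℤ):ℝ)/n = (j:ℝ)/n + 1/n := by push_cast; ring
  rw [hc] at h2
  have h3 : 1/(n:ℝ) = 2 * (1/(2*n)) := by field_simp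
  rw [abs_le]
  constructor <;> linarith

lemma edge_bound {n : ℕ} (hn : 0 < n) (i : ℤ) : |gridc n i - (i:ℝ)/n| ≤ 1/(2*n) := by
  have hn' : (0:ℝ) < n := by exact_mod_cast hn
  rw [gridc_eq hn]
  rw [show (i:ℝ)/n - 1/(2*n) - (i:ℝ)/n = -(1/(2*n)) from by ring, abs_neg,
    abs_of_nonneg (by positivity)]

lemma dist_TE_le {n : ℕ} (hn : 0 < n) (z z' : ℝ × ℝ)
    (h1 : |z.1 - z'.1| ≤ 1/(2*n)) (h2 : |z.2 - z'.2| ≤ 1/(2*n)) :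
    dist (TE z) (TE z') ≤ 1/n := by
  have hn' : (0:ℝ) < n := by exact_mod_cast hn
  rw [dist_eq_norm]
  have he : TE z - TE z' = TE (z - z') := (TEcm.map_sub z z').symm
  rw [he]
  have hsq : ‖TE (z - z')‖^2 ≤ (1/n)^2 := by
    rw [norm_sq_eq]
    have e0 : TE (z - z') 0 = z.1 - z'.1 := rfl
    have e1 : TE (z - z') 1 = z.2 - z'.2 := rfl
    rw [e0, e1]
    have s1 := sq_abs (z.1 - z'.1)
    have s2 := sq_abs (z.2 - z'.2)
    have b1 : |z.1 - z'.1|^2 ≤ (1/(2*n))^2 := by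
      apply pow_le_pow_left₀ (abs_nonneg _) h1
    have b2 : |z.2 - z'.2|^2 ≤ (1/(2*n))^2 := by
      apply pow_le_pow_left₀ (abs_nonneg _) h2
    have hhalf : 1/(2*(n:ℝ)) = (1/n)/2 := by rw [div_div, mul_comm]
    have : (1/(2*(n:ℝ)))^2 + (1/(2*n))^2 ≤ (1/n)^2 := by
      rw [hhalf]
      nlinarith [sq_nonneg (1/(n:ℝ))]
    linarith
  calc ‖TE (z - z')‖ = Real.sqrt (‖TE (z - z')‖^2) := (Real.sqrt_sq (norm_nonneg _)).symm
    _ ≤ Real.sqrt ((1/n)^2) := Real.sqrt_le_sqrt hsq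
    _ = 1/n := Real.sqrt_sq (by positivity)

section P2

variable {p : E2 → E2}

set_option maxHeartbeats 2000000 in
lemma percell (hp1 : ContDiff ℝ 1 p) (hp2 : HasCompactSupport p) (hp4 : ∀ x, ‖p x‖ ≤ 1) :
    ∃ L : ℝ, 0 ≤ L ∧ ∀ (n : ℕ), 0 < n → ∀ (i j : ℤ) (a1 a2 a3 a4 : ℝ),
      0 ≤ a1 → 0 ≤ a2 → 0 ≤ a3 → 0 ≤ a4 →
      a1 * pos (-(XF p n i j)) + a2 * pos (XF p n (i-1) j)
        + a3 * pos (-(YF p n i j)) + a4 * pos (YF p n i (j-1)) ≤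
      (1 + 4*L/n) * ((1/n) * Real.sqrt (a1^2 + a2^2 + a3^2 + a4^2)) := by
  obtain ⟨C0, hC0⟩ := ((hp1.continuous_fderiv one_ne_zero).norm).bounded_above_of_compact_support
    ((hp2.fderiv (𝕜 := ℝ)).norm)
  set L := max C0 0 with hLdef
  have hL0 : 0 ≤ L := le_max_right _ _
  have hlipW : LipschitzWith (Real.toNNReal L) p := by
    apply lipschitzWith_of_nnnorm_fderiv_le (hp1.differentiable one_ne_zero)
    intro x
    rw [← NNReal.coe_le_coe, coe_nnnorm, Real.coe_toNNReal _ hL0]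
    exact ((le_abs_self _).trans (hC0 x)).trans (le_max_left _ _)
  have hlip : ∀ x y : E2, ‖p x - p y‖ ≤ L * dist x y := by
    intro x y
    have h := hlipW.dist_le_mul x y
    rwa [dist_eq_norm, Real.coe_toNNReal _ hL0] at h
  refine ⟨L, hL0, ?_⟩
  intro n hn i j a1 a2 a3 a4 ha1 ha2 ha3 ha4
  have hn' : (0:ℝ) < n := by exact_mod_cast hn
  set xc := TE ((i:ℝ)/n, (j:ℝ)/n) with hxc
  set en := L * (1/(n:ℝ)) with hedef
  have he : 0 ≤ en := by positivity
  set q1 := pos (-(p xc 0)) with hq1d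
  set q2 := pos (p xc 0) with hq2d
  set q3 := pos (-(p xc 1)) with hq3d
  set q4 := pos (p xc 1) with hq4d
  have haux : ∀ y : E2, dist y xc ≤ 1/n →
      (-(p y 0) ≤ q1 + en ∧ p y 0 ≤ q2 + en ∧ -(p y 1) ≤ q3 + en ∧ p y 1 ≤ q4 + en) := by
    intro y hy
    have hd : ∀ k : Fin 2, |p y k - p xc k| ≤ en := by
      intro k
      calc |p y k - p xc k| = |(p y - p xc) k| := by rw [PiLp.sub_apply]
        _ ≤ ‖p y - p xc‖ := coord_le_norm _ k
        _ ≤ L * dist y xc := hlip y xc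
        _ ≤ L * (1/n) := mul_le_mul_of_nonneg_left hy hL0
    have h0 := hd 0
    have h1 := hd 1
    have e1 : |(-(p y 0)) - (-(p xc 0))| = |p y 0 - p xc 0| := by
      rw [show (-(p y 0)) - (-(p xc 0)) = -(p y 0 - p xc 0) from by ring, abs_neg]
    have e2 : |(-(p y 1)) - (-(p xc 1))| = |p y 1 - p xc 1| := by
      rw [show (-(p y 1)) - (-(p xc 1)) = -(p y 1 - p xc 1) from by ring, abs_neg]
    refine ⟨?_, ?_, ?_, ?_⟩
    · have := pos_lip (-(p y 0)) (-(p xc 0))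
      have h2 := le_pos (-(p y 0))
      rw [e1] at this
      linarith
    · have := pos_lip (p y 0) (p xc 0)
      have h2 := le_pos (p y 0)
      linarith
    · have := pos_lip (-(p y 1)) (-(p xc 1))
      have h2 := le_pos (-(p y 1))
      rw [e2] at this
      linarith
    · have := pos_lip (p y 1) (p xc 1)
      have h2 := le_pos (p y 1)
      linarith
  have hq1e : 0 ≤ q1 + en := add_nonneg (pos_nonneg _) he
  have hq2e : 0 ≤ q2 + en := add_nonneg (pos_nonneg _) he
  have hq3e : 0 ≤ q3 + en := add_nonneg (pos_nonneg _) he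
  have hq4e : 0 ≤ q4 + en := add_nonneg (pos_nonneg _) he
  -- the four face estimates
  have hface1 : pos (-(XF p n i j)) ≤ (1/n) * (q1 + en) := by
    rw [XF, ← intervalIntegral.integral_neg]
    have hb := face_bound (φ := fun t => -(fX p (gridc n (i+1), t)))
      ((fX_cont hp1).comp (Continuous.prodMk_right _)).neg (gridc_le hn j)
      (fun t ht => by
        have hdist : dist (TE (gridc n (i+1), t)) xc ≤ 1/n :=
          dist_TE_le hn _ _ (le_of_eq (gridc_dist hn i)) (mid_bound hn j ht)
        exact (haux _ hdist).1)
      hq1e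
    rw [gridc_sub hn] at hb
    exact hb
  have hface2 : pos (XF p n (i-1) j) ≤ (1/n) * (q2 + en) := by
    rw [XF, show i - 1 + 1 = i from by omega]
    have hb := face_bound (φ := fun t => fX p (gridc n i, t))
      ((fX_cont hp1).comp (Continuous.prodMk_right _)) (gridc_le hn j)
      (fun t ht => by
        have hdist : dist (TE (gridc n i, t)) xc ≤ 1/n :=
          dist_TE_le hn _ _ (edge_bound hn i) (mid_bound hn j ht)
        exact (haux _ hdist).2.1)
      hq2e
    rw [gridc_sub hn] at hb
    exact hb
  have hface3 : pos (-(YF p n i j)) ≤ (1/n) * (q3 + en) := by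
    rw [YF, ← intervalIntegral.integral_neg]
    have hb := face_bound (φ := fun s => -(fY p (s, gridc n (j+1))))
      ((fY_cont hp1).comp (Continuous.prodMk_left _)).neg (gridc_le hn i)
      (fun s hs => by
        have hdist : dist (TE (s, gridc n (j+1))) xc ≤ 1/n :=
          dist_TE_le hn _ _ (mid_bound hn i hs) (le_of_eq (gridc_dist hn j))
        exact (haux _ hdist).2.2.1)
      hq3e
    rw [gridc_sub hn] at hb
    exact hb
  have hface4 : pos (YF p n i (j-1)) ≤ (1/n) * (q4 + en) := by
    rw [YF, show j - 1 + 1 = j from by omega]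
    have hb := face_bound (φ := fun s => fY p (s, gridc n j))
      ((fY_cont hp1).comp (Continuous.prodMk_left _)) (gridc_le hn i)
      (fun s hs => by
        have hdist : dist (TE (s, gridc n j)) xc ≤ 1/n :=
          dist_TE_le hn _ _ (mid_bound hn i hs) (edge_bound hn j)
        exact (haux _ hdist).2.2.2)
      hq4e
    rw [gridc_sub hn] at hb
    exact hb
  -- quadratic bound on the coefficients
  have hq : q1^2 + q2^2 + q3^2 + q4^2 ≤ 1 := by
    have h1 := pos_sq_add (p xc 0)
    have h2 := pos_sq_add (p xc 1)
    have h3 : (p xc 0)^2 + (p xc 1)^2 ≤ 1 := by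
      have h4 := hp4 xc
      have h5 := norm_sq_eq (p xc)
      nlinarith [norm_nonneg (p xc)]
    rw [hq1d, hq2d, hq3d, hq4d]
    linarith
  have hk1 : q1 ≤ 1 := by nlinarith [pos_nonneg (-(p xc 0)), sq_nonneg q2, sq_nonneg q3, sq_nonneg q4]
  have hk2 : q2 ≤ 1 := by nlinarith [pos_nonneg (p xc 0), sq_nonneg q1, sq_nonneg q3, sq_nonneg q4]
  have hk3 : q3 ≤ 1 := by nlinarith [pos_nonneg (-(p xc 1)), sq_nonneg q1, sq_nonneg q2, sq_nonneg q4]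
  have hk4 : q4 ≤ 1 := by nlinarith [pos_nonneg (p xc 1), sq_nonneg q1, sq_nonneg q2, sq_nonneg q3]
  have hsq : Real.sqrt ((q1+en)^2 + (q2+en)^2 + (q3+en)^2 + (q4+en)^2) ≤ 1 + 4*en := by
    have h' : (q1+en)^2 + (q2+en)^2 + (q3+en)^2 + (q4+en)^2 ≤ (1+4*en)^2 := by
      nlinarith [he, hq, hk1, hk2, hk3, hk4, pos_nonneg (-(p xc 0)), pos_nonneg (p xc 0),
        pos_nonneg (-(p xc 1)), pos_nonneg (p xc 1)]
    calc Real.sqrt ((q1+en)^2 + (q2+en)^2 + (q3+en)^2 + (q4+en)^2)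
        ≤ Real.sqrt ((1+4*en)^2) := Real.sqrt_le_sqrt h'
      _ = 1 + 4*en := Real.sqrt_sq (by positivity)
  calc a1 * pos (-(XF p n i j)) + a2 * pos (XF p n (i-1) j)
        + a3 * pos (-(YF p n i j)) + a4 * pos (YF p n i (j-1))
      ≤ a1 * ((1/n) * (q1 + en)) + a2 * ((1/n) * (q2 + en))
        + a3 * ((1/n) * (q3 + en)) + a4 * ((1/n) * (q4 + en)) := by
        apply add_le_add (add_le_add (add_le_add ?_ ?_) ?_) ?_
        · exact mul_le_mul_of_nonneg_left hface1 ha1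
        · exact mul_le_mul_of_nonneg_left hface2 ha2
        · exact mul_le_mul_of_nonneg_left hface3 ha3
        · exact mul_le_mul_of_nonneg_left hface4 ha4
    _ = (1/n) * (a1 * (q1+en) + a2 * (q2+en) + a3 * (q3+en) + a4 * (q4+en)) := by ring
    _ ≤ (1/n) * (Real.sqrt (a1^2 + a2^2 + a3^2 + a4^2)
          * Real.sqrt ((q1+en)^2 + (q2+en)^2 + (q3+en)^2 + (q4+en)^2)) := by
        apply mul_le_mul_of_nonneg_left
          (cs4 ha1 ha2 ha3 ha4 hq1e hq2e hq3e hq4e) (by positivity)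
    _ ≤ (1/n) * (Real.sqrt (a1^2 + a2^2 + a3^2 + a4^2) * (1 + 4*en)) := by
        apply mul_le_mul_of_nonneg_left
          (mul_le_mul_of_nonneg_left hsq (Real.sqrt_nonneg _)) (by positivity)
    _ = (1 + 4*L/n) * ((1/n) * Real.sqrt (a1^2 + a2^2 + a3^2 + a4^2)) := by
        rw [hedef]; ring

set_option maxHeartbeats 1000000 in
lemma main_bound (hp1 : ContDiff ℝ 1 p) (hp2 : HasCompactSupport p)
    (hp3 : tsupport p ⊆ unitSq) (hp4 : ∀ x, ‖p x‖ ≤ 1) :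
    ∃ L : ℝ, 0 ≤ L ∧ ∀ (n : ℕ), 2 ≤ n → ∀ w : ℤ × ℤ → ℝ,
      (∀ q : ℤ × ℤ, ¬(1 ≤ q.1 ∧ q.1 ≤ (n : ℤ) ∧ 1 ≤ q.2 ∧ q.2 ≤ (n : ℤ)) → w q = 0) →
      ∫ x in unitSq, Pn n w x * vdiv p x ≤ (1 + 4*L/n) * TVn n w := by
  obtain ⟨L, hL0, hcell⟩ := percell hp1 hp2 hp4
  refine ⟨L, hL0, ?_⟩
  intro n hn w hw
  have hn0 : 0 < n := by omega
  rw [unitSq_decomp hp1 hp2 hp3 hn w hw]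
  rw [Finset.sum_congr rfl (fun q _ => by rw [cell_div hp1 hp2 hn0 q.1 q.2])]
  calc ∑ q ∈ Sgrid n, w q * ((YF p n q.1 q.2 - YF p n q.1 (q.2-1))
          + (XF p n q.1 q.2 - XF p n (q.1-1) q.2))
      = ∑ q ∈ Sgrid n, ((w q - w (q.1+1, q.2)) * XF p n q.1 q.2
          + (w q - w (q.1, q.2+1)) * YF p n q.1 q.2) :=
        abel_sum n w hw (XF p n) (YF p n)
    _ ≤ ∑ q ∈ Sgrid n,
        (pos (w (q.1+1, q.2) - w q) * pos (-(XF p n q.1 q.2))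
          + pos (w (q.1-1, q.2) - w q) * pos (XF p n (q.1-1) q.2)
          + pos (w (q.1, q.2+1) - w q) * pos (-(YF p n q.1 q.2))
          + pos (w (q.1, q.2-1) - w q) * pos (YF p n q.1 (q.2-1))) :=
        upwind n w hw (XF p n) (YF p n)
    _ ≤ ∑ q ∈ Sgrid n, (1 + 4*L/n) * ((1/n) * Real.sqrt
          (pos (w (q.1+1, q.2) - w q)^2 + pos (w (q.1-1, q.2) - w q)^2
            + pos (w (q.1, q.2+1) - w q)^2 + pos (w (q.1, q.2-1) - w q)^2)) :=
        Finset.sum_le_sum (fun q _ => hcell n hn0 q.1 q.2 _ _ _ _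
          (pos_nonneg _) (pos_nonneg _) (pos_nonneg _) (pos_nonneg _))
    _ = (1 + 4*L/n) * TVn n w := by
        rw [TVn, Sgrid, Finset.sum_product]
        simp only [Finset.mul_sum]

end P2


lemma TVn_nonneg (n : ℕ) (w : ℤ × ℤ → ℝ) : 0 ≤ TVn n w := by
  apply mul_nonneg (by positivity)
  exact Finset.sum_nonneg fun _ _ => Finset.sum_nonneg fun _ _ => Real.sqrt_nonneg _

lemma unitSq_open : IsOpen unitSq := by
  have he : unitSq = ((EuclideanSpace.proj (0 : Fin 2)) ⁻¹' (Set.Ioo (0:ℝ) 1)) ∩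
      ((EuclideanSpace.proj (1 : Fin 2)) ⁻¹' (Set.Ioo (0:ℝ) 1)) := by
    ext x
    simp only [unitSq, Set.mem_setOf_eq, Set.mem_inter_iff, Set.mem_preimage]
    rfl
  rw [he]
  exact (isOpen_Ioo.preimage (EuclideanSpace.proj (0 : Fin 2)).continuous).inter
    (isOpen_Ioo.preimage (EuclideanSpace.proj (1 : Fin 2)).continuous)

lemma Pn_integrable {n : ℕ} (hn : 2 ≤ n) (w : ℤ × ℤ → ℝ)
    (hw : ∀ q : ℤ × ℤ, ¬(1 ≤ q.1 ∧ q.1 ≤ (n : ℤ) ∧ 1 ≤ q.2 ∧ q.2 ≤ (n : ℤ)) → w q = 0) :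
    Integrable (Pn n w) := by
  have hn0 : 0 < n := by omega
  rw [show Pn n w = fun x => ∑ q ∈ Sgrid n, w q * (cell n q.1 q.2).indicator (fun _ => (1:ℝ)) x
    from funext (Pn_eq_sum hn w hw)]
  apply integrable_finset_sum
  intro q _
  apply Integrable.const_mul
  rw [integrable_indicator_iff (cell_measurable hn0 _ _)]
  exact integrableOn_const (cell_volume_lt_top hn0 _ _).ne

section P3

variable {p : E2 → E2}

lemma conv_lemma (hp1 : ContDiff ℝ 1 p) (hp2 : HasCompactSupport p)
    (w : ℕ → ℤ × ℤ → ℝ)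
    (hsupp : ∀ n : ℕ, 2 ≤ n → ∀ q : ℤ × ℤ,
      ¬(1 ≤ q.1 ∧ q.1 ≤ (n : ℤ) ∧ 1 ≤ q.2 ∧ q.2 ≤ (n : ℤ)) → w n q = 0)
    (v : E2 → ℝ) (hv : Integrable v)
    (hconv : Filter.Tendsto (fun n => ∫ x in unitSq, |Pn n (w n) x - v x|)
      Filter.atTop (nhds 0)) :
    Filter.Tendsto (fun n => ∫ x in unitSq, Pn n (w n) x * vdiv p x) Filter.atTop
      (nhds (∫ x in unitSq, v x * vdiv p x)) := by
  obtain ⟨M, hM⟩ := (vdiv_continuous hp1).bounded_above_of_compact_support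
    (vdiv_compact_support hp2)
  have hM0 : 0 ≤ M := (norm_nonneg _).trans (hM 0)
  have hMabs : ∀ x, |vdiv p x| ≤ M := fun x => by
    have := hM x
    rwa [Real.norm_eq_abs] at this
  have hvameas : AEStronglyMeasurable (vdiv p) (volume.restrict unitSq) :=
    (vdiv_continuous hp1).aestronglyMeasurable.restrict
  have hvI : IntegrableOn (fun x => v x * vdiv p x) unitSq := by
    have h := Integrable.bdd_mul (hv.restrict (s := unitSq)) hvameas (ae_of_all _ hM)
    exact h.congr (Filter.Eventually.of_forall fun x => mul_comm _ _)
  rw [← tendsto_sub_nhds_zero_iff]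
  apply squeeze_zero_norm'
    (a := fun n => M * ∫ x in unitSq, |Pn n (w n) x - v x|)
  · filter_upwards [Filter.eventually_ge_atTop 2] with n hn
    have hPnint : Integrable (Pn n (w n)) := Pn_integrable hn (w n) (hsupp n hn)
    have hPI : IntegrableOn (fun x => Pn n (w n) x * vdiv p x) unitSq := by
      have h := Integrable.bdd_mul (hPnint.restrict (s := unitSq)) hvameas (ae_of_all _ hM)
      exact h.congr (Filter.Eventually.of_forall fun x => mul_comm _ _)
    rw [← integral_sub hPI hvI]
    have hdiffI : IntegrableOn (fun x => Pn n (w n) x - v x) unitSq :=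
      hPnint.restrict.sub hv.restrict
    calc ‖∫ x in unitSq, (Pn n (w n) x * vdiv p x - v x * vdiv p x)‖
        ≤ ∫ x in unitSq, ‖Pn n (w n) x * vdiv p x - v x * vdiv p x‖ :=
          norm_integral_le_integral_norm _
      _ ≤ ∫ x in unitSq, M * |Pn n (w n) x - v x| := by
          apply integral_mono ((hPI.sub hvI).norm)
            (hdiffI.abs.const_mul M)
          intro x
          simp only [Pi.sub_apply]
          have h1 : Pn n (w n) x * vdiv p x - v x * vdiv p x
              = (Pn n (w n) x - v x) * vdiv p x := by ring
          rw [Real.norm_eq_abs, h1, abs_mul]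
          exact mul_le_mul_of_nonneg_left (hMabs x) (abs_nonneg _) |>.trans
            (le_of_eq (mul_comm _ _))
      _ = M * ∫ x in unitSq, |Pn n (w n) x - v x| := integral_const_mul M _
  · have := hconv.const_mul M
    simpa using this

end P3

end S14

theorem stmt_14' (w : ℕ → ℤ × ℤ → ℝ)
    (hsupp : ∀ n : ℕ, 2 ≤ n → ∀ q : ℤ × ℤ,
      ¬(1 ≤ q.1 ∧ q.1 ≤ (n : ℤ) ∧ 1 ≤ q.2 ∧ q.2 ≤ (n : ℤ)) → w n q = 0)
    (v : E2 → ℝ) (hv : Integrable v)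
    (hconv : Filter.Tendsto (fun n => ∫ x in unitSq, |Pn n (w n) x - v x|)
      Filter.atTop (nhds 0)) :
    (⨆ p : {p : E2 → E2 //
      ContDiff ℝ 1 p ∧ HasCompactSupport p ∧ tsupport p ⊆ unitSq ∧ ∀ x, ‖p x‖ ≤ 1},
    ENNReal.ofReal (∫ x in unitSq, v x * vdiv p.1 x))
      ≤ Filter.liminf (fun n => ENNReal.ofReal (TVn n (w n))) Filter.atTop := by
  apply iSup_le
  rintro ⟨p, hp1, hp2, hp3, hp4⟩
  obtain ⟨L, hL0, hmain⟩ := S14.main_bound hp1 hp2 hp3 hp4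
  have hJ := S14.conv_lemma hp1 hp2 w hsupp v hv hconv
  apply ENNReal.le_of_forall_nnreal_lt
  intro r hr
  by_cases hr0 : r = 0
  · simp [hr0]
  have hrpos : (0:ℝ) < (r:ℝ) := by
    have := pos_iff_ne_zero.2 hr0
    exact_mod_cast this
  have hrI : (r:ℝ) < ∫ x in unitSq, v x * vdiv p x := by
    have h := (ENNReal.lt_ofReal_iff_toReal_lt (a := (r : ℝ≥0∞)) (by simp)).mp hr
    simpa using h
  set I := ∫ x in unitSq, v x * vdiv p x with hIdef
  set θ := ((r:ℝ) + I)/2 with hθdef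
  have hθr : (r:ℝ) < θ := by rw [hθdef]; linarith
  have hθI : θ < I := by rw [hθdef]; linarith
  have hθpos : 0 < θ := by linarith
  have hev1 : ∀ᶠ n in Filter.atTop, θ < ∫ x in unitSq, Pn n (w n) x * vdiv p x :=
    hJ.eventually (eventually_gt_nhds hθI)
  have hratio : 0 < θ/(r:ℝ) - 1 := by
    rw [sub_pos]
    exact (one_lt_div hrpos).mpr hθr
  have hev2 : ∀ᶠ n : ℕ in Filter.atTop, 4*L/(n:ℝ) ≤ θ/(r:ℝ) - 1 :=
    (tendsto_const_div_atTop_nhds_zero_nat (4*L)).eventually (eventually_le_nhds hratio)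
  have hev3 : ∀ᶠ n : ℕ in Filter.atTop, 2 ≤ n := Filter.eventually_ge_atTop 2
  apply Filter.le_liminf_of_le (by isBoundedDefault)
  filter_upwards [hev1, hev2, hev3] with n h1 h2 h3
  have hb := hmain n h3 (w n) (hsupp n h3)
  have hTn : 0 ≤ TVn n (w n) := S14.TVn_nonneg n (w n)
  have hcoef : (1 + 4*L/(n:ℝ)) ≤ θ/(r:ℝ) := by linarith
  have h5 : θ < (θ/(r:ℝ)) * TVn n (w n) :=
    lt_of_lt_of_le h1 (hb.trans (mul_le_mul_of_nonneg_right hcoef hTn))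
  have hrT : (r:ℝ) ≤ TVn n (w n) := by
    by_contra hcon
    push_neg at hcon
    have h6 : (θ/(r:ℝ)) * TVn n (w n) ≤ θ := by
      rw [div_mul_eq_mul_div, div_le_iff₀ hrpos]
      nlinarith
    linarith
  calc (r : ℝ≥0∞) = ENNReal.ofReal (r:ℝ) := by simp
    _ ≤ ENNReal.ofReal (TVn n (w n)) := ENNReal.ofReal_le_ofReal hrT

/-- Γ-liminf inequality for the upwind finite-difference discretization of the
total variation: if the piecewise constant interpolations `Pn n (w n)` converge to `v` in
`L¹((0,1)²)`, then `TV(v, (0,1)²) ≤ liminf TVⁿ(wₙ)`. -/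
theorem stmt_14 (w : ℕ → ℤ × ℤ → ℝ)
    (hsupp : ∀ n : ℕ, 2 ≤ n → ∀ q : ℤ × ℤ,
      ¬(1 ≤ q.1 ∧ q.1 ≤ (n : ℤ) ∧ 1 ≤ q.2 ∧ q.2 ≤ (n : ℤ)) → w n q = 0)
    (v : E2 → ℝ) (hv : Integrable v)
    (hconv : Filter.Tendsto (fun n => ∫ x in unitSq, |Pn n (w n) x - v x|)
      Filter.atTop (nhds 0)) :
    TV v unitSq ≤ Filter.liminf (fun n => ENNReal.ofReal (TVn n (w n))) Filter.atTop := by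
  exact stmt_14' w hsupp v hv hconv

end
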